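/- In the Bauer–Catanese case G = (ℤ/5ℤ)²: with F = Π₁ × Π₂ and K the kernel of (p,q) ↦ φ(p) − ψ(q), the quotient group ⁅F, F⁆ / ⁅K, K⁆ is isomorphic to ℤ/5ℤ. -/

import Mathlib

/-- Relators of `Π₁ = ⟨a₁, a₂, a₃ ∣ a₁⁵, a₂⁵, a₃⁵, a₁a₂a₃⟩`. -/
def bcRels₁ : Set (FreeGroup (Fin 3)) :=
  {FreeGroup.of 0 ^ 5, FreeGroup.of 1 ^ 5, FreeGroup.of 2 ^ 5,
   FreeGroup.of 0 * FreeGroup.of 1 * FreeGroup.of 2}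

/-- Relators of `Π₂ = ⟨b₁, b₂, b₃ ∣ b₁⁵, b₂⁵, b₃⁵, b₁b₂b₃⟩`. -/
def bcRels₂ : Set (FreeGroup (Fin 3)) :=
  {FreeGroup.of 0 ^ 5, FreeGroup.of 1 ^ 5, FreeGroup.of 2 ^ 5,
   FreeGroup.of 0 * FreeGroup.of 1 * FreeGroup.of 2}

/-- The group `G = (ℤ/5ℤ)²`, written multiplicatively. -/
abbrev bcG : Type := Multiplicative (ZMod 5 × ZMod 5)

@[ext] structure BH where
  x1 : ZMod 5
  y1 : ZMod 5
  x2 : ZMod 5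
  y2 : ZMod 5
  t : ZMod 5
deriving DecidableEq

namespace BH

instance : Mul BH :=
  ⟨fun a b => ⟨a.x1 + b.x1, a.y1 + b.y1, a.x2 + b.x2, a.y2 + b.y2,
    a.t + b.t + a.x1 * b.y1 - a.x2 * b.y2⟩⟩

instance : One BH := ⟨⟨0, 0, 0, 0, 0⟩⟩

instance : Inv BH :=
  ⟨fun a => ⟨-a.x1, -a.y1, -a.x2, -a.y2, -a.t + a.x1 * a.y1 - a.x2 * a.y2⟩⟩

@[simp] lemma mul_x1 (a b : BH) : (a * b).x1 = a.x1 + b.x1 := rfl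
@[simp] lemma mul_y1 (a b : BH) : (a * b).y1 = a.y1 + b.y1 := rfl
@[simp] lemma mul_x2 (a b : BH) : (a * b).x2 = a.x2 + b.x2 := rfl
@[simp] lemma mul_y2 (a b : BH) : (a * b).y2 = a.y2 + b.y2 := rfl
@[simp] lemma mul_t (a b : BH) : (a * b).t = a.t + b.t + a.x1 * b.y1 - a.x2 * b.y2 := rfl
@[simp] lemma one_x1 : (1 : BH).x1 = 0 := rfl
@[simp] lemma one_y1 : (1 : BH).y1 = 0 := rfl
@[simp] lemma one_x2 : (1 : BH).x2 = 0 := rfl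
@[simp] lemma one_y2 : (1 : BH).y2 = 0 := rfl
@[simp] lemma one_t : (1 : BH).t = 0 := rfl
@[simp] lemma inv_x1 (a : BH) : (a⁻¹).x1 = -a.x1 := rfl
@[simp] lemma inv_y1 (a : BH) : (a⁻¹).y1 = -a.y1 := rfl
@[simp] lemma inv_x2 (a : BH) : (a⁻¹).x2 = -a.x2 := rfl
@[simp] lemma inv_y2 (a : BH) : (a⁻¹).y2 = -a.y2 := rfl
@[simp] lemma inv_t (a : BH) : (a⁻¹).t = -a.t + a.x1 * a.y1 - a.x2 * a.y2 := rfl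

instance : Group BH where
  mul_assoc a b c := by ext <;> simp <;> ring
  one_mul a := by ext <;> simp
  mul_one a := by ext <;> simp
  inv_mul_cancel a := by ext <;> simp <;> ring

end BH

/-- generator images for Π₁ → BH -/
def bhGen₁ : Fin 3 → BH :=
  ![⟨1,0,0,0,0⟩, ⟨0,1,0,0,0⟩, (⟨1,0,0,0,0⟩ * (⟨0,1,0,0,0⟩ : BH))⁻¹]

/-- generator images for Π₂ → BH -/
def bhGen₂ : Fin 3 → BH :=
  ![⟨0,0,1,2,0⟩, ⟨0,0,3,4,0⟩, (⟨0,0,1,2,0⟩ * (⟨0,0,3,4,0⟩ : BH))⁻¹]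

lemma bhGen₁_rels : ∀ r ∈ bcRels₁, FreeGroup.lift bhGen₁ r = 1 := by
  intro r hr
  rcases hr with h | h | h | h <;> subst h <;>
    simp only [map_pow, map_mul, FreeGroup.lift_apply_of] <;> decide

lemma bhGen₂_rels : ∀ r ∈ bcRels₂, FreeGroup.lift bhGen₂ r = 1 := by
  intro r hr
  rcases hr with h | h | h | h <;> subst h <;>
    simp only [map_pow, map_mul, FreeGroup.lift_apply_of] <;> decide

def bhF₁ : PresentedGroup bcRels₁ →* BH := PresentedGroup.toGroup bhGen₁_rels
def bhF₂ : PresentedGroup bcRels₂ →* BH := PresentedGroup.toGroup bhGen₂_rels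

/-- first-factor subgroup of BH -/
def bhS₁ : Subgroup BH where
  carrier := {h | h.x2 = 0 ∧ h.y2 = 0}
  one_mem' := by constructor <;> rfl
  mul_mem' := by rintro a b ⟨h1, h2⟩ ⟨h3, h4⟩; constructor <;> simp [h1, h2, h3, h4]
  inv_mem' := by rintro a ⟨h1, h2⟩; constructor <;> simp [h1, h2]

def bhS₂ : Subgroup BH where
  carrier := {h | h.x1 = 0 ∧ h.y1 = 0}
  one_mem' := by constructor <;> rfl
  mul_mem' := by rintro a b ⟨h1, h2⟩ ⟨h3, h4⟩; constructor <;> simp [h1, h2, h3, h4]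
  inv_mem' := by rintro a ⟨h1, h2⟩; constructor <;> simp [h1, h2]

/-- generation lemma for presented groups on `Fin 3` -/
lemma presented_gen {rels : Set (FreeGroup (Fin 3))} (S : Subgroup (PresentedGroup rels))
    (h : ∀ i, PresentedGroup.of i ∈ S) : ∀ p, p ∈ S := by
  intro p
  induction p using QuotientGroup.induction_on with
  | H z =>
    induction z using FreeGroup.induction_on with
    | C1 => exact S.one_mem
    | of x => exact h x
    | inv_of x _ => exact S.inv_mem (h x)
    | mul x y hx hy => exact S.mul_mem hx hy

lemma bhF₁_mem : ∀ p, bhF₁ p ∈ bhS₁ := by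
  apply presented_gen (bhS₁.comap bhF₁)
  intro i
  show bhF₁ _ ∈ bhS₁
  show _ ∧ _
  fin_cases i <;> simp only [bhF₁, PresentedGroup.toGroup.of] <;> exact ⟨by decide, by decide⟩

lemma bhF₂_mem : ∀ p, bhF₂ p ∈ bhS₂ := by
  apply presented_gen (bhS₂.comap bhF₂)
  intro i
  show bhF₂ _ ∈ bhS₂
  show _ ∧ _
  fin_cases i <;> simp only [bhF₂, PresentedGroup.toGroup.of] <;> exact ⟨by decide, by decide⟩

lemma bh_cross_commute {a b : BH} (ha : a ∈ bhS₁) (hb : b ∈ bhS₂) : Commute a b := by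
  obtain ⟨h1, h2⟩ := ha; obtain ⟨h3, h4⟩ := hb
  show a * b = b * a
  ext <;> simp [h1, h2, h3, h4] <;> ring

/-- the homomorphism ρ : F → BH -/
def bhρ : PresentedGroup bcRels₁ × PresentedGroup bcRels₂ →* BH :=
  MonoidHom.noncommCoprod bhF₁ bhF₂ (fun p q => bh_cross_commute (bhF₁_mem p) (bhF₂_mem q))

namespace BC

open scoped commutatorElement

open PresentedGroup

abbrev P1 := PresentedGroup bcRels₁
abbrev P2 := PresentedGroup bcRels₂
abbrev FF := P1 × P2

/-- relator consequences -/
lemma rel_eq_one {α : Type*} {rels : Set (FreeGroup α)} {r : FreeGroup α} (h : r ∈ rels) :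
    PresentedGroup.mk rels r = 1 :=
  (QuotientGroup.eq_one_iff _).mpr (Subgroup.subset_normalClosure h)

lemma P1_pow0 : (PresentedGroup.of 0 : P1) ^ 5 = 1 := by
  have := rel_eq_one (rels := bcRels₁) (r := FreeGroup.of 0 ^ 5) (by left; rfl)
  rwa [map_pow] at this

lemma P1_rel : (PresentedGroup.of 2 : P1) = (PresentedGroup.of 0 * PresentedGroup.of 1)⁻¹ := by
  have := rel_eq_one (rels := bcRels₁)
    (r := FreeGroup.of 0 * FreeGroup.of 1 * FreeGroup.of 2) (by right; right; right; rfl)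
  exact eq_inv_of_mul_eq_one_right this

lemma P2_rel : (PresentedGroup.of 2 : P2) = (PresentedGroup.of 0 * PresentedGroup.of 1)⁻¹ := by
  have := rel_eq_one (rels := bcRels₂)
    (r := FreeGroup.of 0 * FreeGroup.of 1 * FreeGroup.of 2) (by right; right; right; rfl)
  exact eq_inv_of_mul_eq_one_right this

-- commutator identities
section GroupIdent
variable {G : Type*} [Group G] (x y z : G)

lemma comm_mul_left : ⁅x * y, z⁆ = x * ⁅y, z⁆ * x⁻¹ * ⁅x, z⁆ := by group
lemma comm_mul_right : ⁅x, y * z⁆ = ⁅x, y⁆ * (y * ⁅x, z⁆ * y⁻¹) := by group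
lemma comm_inv_left : ⁅x⁻¹, z⁆ = x⁻¹ * ⁅x, z⁆⁻¹ * x := by group
lemma comm_inv_right : ⁅x, y⁻¹⁆ = y⁻¹ * ⁅x, y⁆⁻¹ * y := by group

lemma conj_eq {a b : G} (h : Commute a b) : a * b * a⁻¹ = b := by
  rw [h.eq, mul_assoc, mul_inv_cancel, mul_one]

end GroupIdent

lemma prod_commutator {G H : Type*} [Group G] [Group H] (a c : G) (b d : H) :
    (⁅(a, b), (c, d)⁆ : G × H) = (⁅a, c⁆, ⁅b, d⁆) := rfl

section Main

variable (φ : P1 →* bcG) (ψ : P2 →* bcG)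

abbrev μhom : FF →* bcG :=
  φ.comp (MonoidHom.fst P1 P2) / ψ.comp (MonoidHom.snd P1 P2)

abbrev KK : Subgroup FF := (μhom φ ψ).ker

abbrev NN : Subgroup FF := ⁅KK φ ψ, KK φ ψ⁆

abbrev QQ := FF ⧸ NN φ ψ

def qmk : FF →* QQ φ ψ := QuotientGroup.mk' _

def m₁ : P1 →* QQ φ ψ := (qmk φ ψ).comp (MonoidHom.inl P1 P2)
def m₂ : P2 →* QQ φ ψ := (qmk φ ψ).comp (MonoidHom.inr P1 P2)

lemma qmk_pair (p : P1) (q : P2) : qmk φ ψ (p, q) = m₁ φ ψ p * m₂ φ ψ q := by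
  rw [m₁, m₂, MonoidHom.comp_apply, MonoidHom.comp_apply, ← map_mul]
  congr 1
  simp [Prod.ext_iff]

lemma mem_K {x : FF} : x ∈ KK φ ψ ↔ φ x.1 = ψ x.2 := by
  rw [MonoidHom.mem_ker, MonoidHom.div_apply, div_eq_one]
  rfl

lemma KCommute {x y : FF} (hx : x ∈ KK φ ψ) (hy : y ∈ KK φ ψ) :
    Commute (qmk φ ψ x) (qmk φ ψ y) := by
  rw [← commutatorElement_eq_one_iff_commute, ← map_commutatorElement]
  exact (QuotientGroup.eq_one_iff _).mpr (Subgroup.commutator_mem_commutator hx hy)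

/-- section of φ -/
def sec₁ (g : bcG) : P1 :=
  PresentedGroup.of 0 ^ (g.toAdd.1.val) * PresentedGroup.of 1 ^ (g.toAdd.2.val)

/-- section of ψ -/
def sec₂ (g : bcG) : P2 :=
  PresentedGroup.of 0 ^ ((3 * g.toAdd.1 + 4 * g.toAdd.2).val) *
    PresentedGroup.of 1 ^ ((g.toAdd.1 + 2 * g.toAdd.2).val)

variable (hφ0 : φ (PresentedGroup.of 0) = Multiplicative.ofAdd (1, 0))
    (hφ1 : φ (PresentedGroup.of 1) = Multiplicative.ofAdd (0, 1))
    (hφ2 : φ (PresentedGroup.of 2) = Multiplicative.ofAdd (-1, -1))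
    (hψ0 : ψ (PresentedGroup.of 0) = Multiplicative.ofAdd (1, 2))
    (hψ1 : ψ (PresentedGroup.of 1) = Multiplicative.ofAdd (3, 4))
    (hψ2 : ψ (PresentedGroup.of 2) = Multiplicative.ofAdd (1, 4))

include hφ0 hφ1 in
lemma hsec₁ (g : bcG) : φ (sec₁ g) = g := by
  have h5 : ∀ a b : ZMod 5,
      (a.val : ZMod 5) * 1 + (b.val : ZMod 5) * 0 = a ∧
      (a.val : ZMod 5) * 0 + (b.val : ZMod 5) * 1 = b := by decide
  rw [sec₁, map_mul, map_pow, map_pow, hφ0, hφ1, ← ofAdd_nsmul,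
    ← ofAdd_nsmul, ← ofAdd_add]
  show Multiplicative.ofAdd _ = g
  conv_rhs => rw [← ofAdd_toAdd g]
  congr 1
  obtain ⟨h1, h2⟩ := h5 g.toAdd.1 g.toAdd.2
  exact Prod.ext (by simpa [nsmul_eq_mul] using h1) (by simpa [nsmul_eq_mul] using h2)

include hψ0 hψ1 in
lemma hsec₂ (g : bcG) : ψ (sec₂ g) = g := by
  have h5 : ∀ a b : ZMod 5,
      ((3 * a + 4 * b).val : ZMod 5) * 1 + ((a + 2 * b).val : ZMod 5) * 3 = a ∧
      ((3 * a + 4 * b).val : ZMod 5) * 2 + ((a + 2 * b).val : ZMod 5) * 4 = b := by decide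
  rw [sec₂, map_mul, map_pow, map_pow, hψ0, hψ1, ← ofAdd_nsmul,
    ← ofAdd_nsmul, ← ofAdd_add]
  show Multiplicative.ofAdd _ = g
  conv_rhs => rw [← ofAdd_toAdd g]
  congr 1
  obtain ⟨h1, h2⟩ := h5 g.toAdd.1 g.toAdd.2
  exact Prod.ext (by simpa [nsmul_eq_mul] using h1) (by simpa [nsmul_eq_mul] using h2)

/-- the distinguished central element -/
def cc : QQ φ ψ := qmk φ ψ (⁅(PresentedGroup.of 0 : P1), PresentedGroup.of 1⁆, 1)

lemma gamma_mem : ((⁅(PresentedGroup.of 0 : P1), PresentedGroup.of 1⁆), (1 : P2)) ∈ KK φ ψ := by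
  rw [mem_K]
  show φ ⁅_, _⁆ = ψ 1
  rw [map_commutatorElement, map_one, Commute.commutator_eq (Commute.all _ _)]

include hψ0 hψ1 in
lemma cc_comm_m₁ (p : P1) : Commute (m₁ φ ψ p) (cc φ ψ) := by
  have hsψ := hsec₂ ψ hψ0 hψ1
  have hgen : ∀ i : Fin 3, Commute (m₁ φ ψ (PresentedGroup.of i)) (cc φ ψ) := ?_
  · have hmem := PresentedGroup.generated_by _
      ((Subgroup.centralizer {cc φ ψ}).comap (m₁ φ ψ)) (fun i => by
        rw [Subgroup.mem_comap, Subgroup.mem_centralizer_iff]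
        intro h hh
        rw [Set.mem_singleton_iff] at hh
        subst hh
        exact (hgen i).symm.eq) p
    have hc := Subgroup.mem_comap.mp hmem
    rw [Subgroup.mem_centralizer_iff] at hc
    exact (hc _ rfl).symm
  intro i
  have hdec : ((PresentedGroup.of i : P1), (1 : P2)) =
      (PresentedGroup.of i, sec₂ (φ (PresentedGroup.of i))) *
        (1, (sec₂ (φ (PresentedGroup.of i)))⁻¹) := by
    simp [Prod.ext_iff]
  have h1 : Commute (qmk φ ψ (PresentedGroup.of i, sec₂ (φ (PresentedGroup.of i)))) (cc φ ψ) :=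
    KCommute φ ψ ((mem_K φ ψ).mpr (hsψ _).symm) (gamma_mem φ ψ)
  have h2 : Commute (qmk φ ψ (1, (sec₂ (φ (PresentedGroup.of i)))⁻¹)) (cc φ ψ) := by
    refine Commute.map ?_ (qmk φ ψ)
    show _ * _ = _ * _
    simp [Prod.ext_iff]
  have : Commute (m₁ φ ψ (PresentedGroup.of i)) (cc φ ψ) := by
    have : m₁ φ ψ (PresentedGroup.of i) = qmk φ ψ (PresentedGroup.of i, 1) := rfl
    rw [this, hdec, map_mul]
    exact h1.mul_left h2
  exact this

include hφ0 hφ1 hψ0 hψ1 in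
lemma cc_comm_m₂ (q : P2) : Commute (m₂ φ ψ q) (cc φ ψ) := by
  have hsφ := hsec₁ φ hφ0 hφ1
  have hgen : ∀ i : Fin 3, Commute (m₂ φ ψ (PresentedGroup.of i)) (cc φ ψ) := ?_
  · have hmem := PresentedGroup.generated_by _
      ((Subgroup.centralizer {cc φ ψ}).comap (m₂ φ ψ)) (fun i => by
        rw [Subgroup.mem_comap, Subgroup.mem_centralizer_iff]
        intro h hh
        rw [Set.mem_singleton_iff] at hh
        subst hh
        exact (hgen i).symm.eq) q
    have hc := Subgroup.mem_comap.mp hmem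
    rw [Subgroup.mem_centralizer_iff] at hc
    exact (hc _ rfl).symm
  intro i
  have hdec : ((1 : P1), (PresentedGroup.of i : P2)) =
      (sec₁ (ψ (PresentedGroup.of i)), PresentedGroup.of i) *
        ((sec₁ (ψ (PresentedGroup.of i)))⁻¹, 1) := by
    simp [Prod.ext_iff]
  have h1 : Commute (qmk φ ψ (sec₁ (ψ (PresentedGroup.of i)), PresentedGroup.of i)) (cc φ ψ) :=
    KCommute φ ψ ((mem_K φ ψ).mpr (hsφ _)) (gamma_mem φ ψ)
  have h2 : Commute (qmk φ ψ ((sec₁ (ψ (PresentedGroup.of i)))⁻¹, 1)) (cc φ ψ) := by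
    have : qmk φ ψ ((sec₁ (ψ (PresentedGroup.of i)))⁻¹, 1) =
        m₁ φ ψ (sec₁ (ψ (PresentedGroup.of i)))⁻¹ := by rw [map_inv]; rfl
    rw [this]
    exact ((cc_comm_m₁ φ ψ hψ0 hψ1 _).inv_left)
  have : Commute (m₂ φ ψ (PresentedGroup.of i)) (cc φ ψ) := by
    have h : m₂ φ ψ (PresentedGroup.of i) = qmk φ ψ (1, PresentedGroup.of i) := rfl
    rw [h, hdec, map_mul]
    exact h1.mul_left h2
  exact this

include hφ0 hφ1 hψ0 hψ1 in
lemma cc_central (x : QQ φ ψ) : Commute x (cc φ ψ) := by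
  obtain ⟨y, rfl⟩ := QuotientGroup.mk'_surjective (NN φ ψ) x
  have : (QuotientGroup.mk' (NN φ ψ)) y = qmk φ ψ (y.1, y.2) := rfl
  rw [this, qmk_pair]
  exact ((cc_comm_m₁ φ ψ hψ0 hψ1 y.1).mul_left (cc_comm_m₂ φ ψ hφ0 hφ1 hψ0 hψ1 y.2))

lemma m₁_comm_base :
    ⁅m₁ φ ψ (PresentedGroup.of 0), m₁ φ ψ (PresentedGroup.of 1)⁆ = cc φ ψ := by
  show ⁅qmk φ ψ ((PresentedGroup.of 0 : P1), (1:P2)), qmk φ ψ (PresentedGroup.of 1, 1)⁆ = _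
  rw [← map_commutatorElement]
  rfl

include hφ0 hφ1 hψ0 hψ1 in
lemma cc_pow (k : ℕ) :
    ⁅m₁ φ ψ (PresentedGroup.of 0 ^ k), m₁ φ ψ (PresentedGroup.of 1)⁆ = cc φ ψ ^ k := by
  induction k with
  | zero => simp
  | succ n ih =>
    rw [pow_succ, map_mul, comm_mul_left, m₁_comm_base, ih,
      conj_eq (cc_central φ ψ hφ0 hφ1 hψ0 hψ1 _), pow_succ]
    exact (Commute.self_pow _ _).eq

include hφ0 hφ1 hψ0 hψ1 in
lemma cc_five : cc φ ψ ^ 5 = 1 := by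
  rw [← cc_pow φ ψ hφ0 hφ1 hψ0 hψ1 5, P1_pow0, map_one, commutatorElement_one_left]

/-- `cc` to a `ZMod 5` exponent -/
def czp (z : ZMod 5) : QQ φ ψ := cc φ ψ ^ z.val

include hφ0 hφ1 hψ0 hψ1 in
lemma cc_pow_mod (n : ℕ) : cc φ ψ ^ (n % 5) = cc φ ψ ^ n := by
  conv_rhs => rw [← Nat.div_add_mod n 5]
  rw [pow_add, pow_mul, cc_five φ ψ hφ0 hφ1 hψ0 hψ1, one_pow, one_mul]

include hφ0 hφ1 hψ0 hψ1 in
lemma czp_natCast (n : ℕ) : czp φ ψ (n : ZMod 5) = cc φ ψ ^ n := by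
  rw [czp, ZMod.val_natCast, cc_pow_mod φ ψ hφ0 hφ1 hψ0 hψ1]

include hφ0 hφ1 hψ0 hψ1 in
lemma czp_add (a b : ZMod 5) : czp φ ψ (a + b) = czp φ ψ a * czp φ ψ b := by
  rw [czp, czp, czp, ZMod.val_add, cc_pow_mod φ ψ hφ0 hφ1 hψ0 hψ1, pow_add]

lemma czp_zero' : czp φ ψ (0 : ZMod 5) = 1 := by
  rw [czp]
  norm_num

include hφ0 hφ1 hψ0 hψ1 in
lemma czp_neg (a : ZMod 5) : czp φ ψ (-a) = (czp φ ψ a)⁻¹ := by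
  have := czp_add φ ψ hφ0 hφ1 hψ0 hψ1 (-a) a
  rw [neg_add_cancel, czp_zero' φ ψ] at this
  exact eq_inv_of_mul_eq_one_left this.symm

/-- the skew pairing on `bcG` -/
def DD (g h : bcG) : ZMod 5 :=
  (Multiplicative.toAdd g).1 * (Multiplicative.toAdd h).2 -
    (Multiplicative.toAdd g).2 * (Multiplicative.toAdd h).1

lemma DD_mul_left (g g' h : bcG) : DD (g * g') h = DD g h + DD g' h := by
  simp only [DD, toAdd_mul, Prod.fst_add, Prod.snd_add]
  ring

lemma DD_mul_right (g h h' : bcG) : DD g (h * h') = DD g h + DD g h' := by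
  simp only [DD, toAdd_mul, Prod.fst_add, Prod.snd_add]
  ring

lemma DD_inv_left (g h : bcG) : DD g⁻¹ h = - DD g h := by
  simp only [DD, toAdd_inv, Prod.fst_neg, Prod.snd_neg]
  ring

lemma DD_inv_right (g h : bcG) : DD g h⁻¹ = - DD g h := by
  simp only [DD, toAdd_inv, Prod.fst_neg, Prod.snd_neg]
  ring

lemma DD_one_left (h : bcG) : DD 1 h = 0 := by
  simp only [DD, toAdd_one]
  show (0 : ZMod 5) * _ - 0 * _ = 0
  ring

lemma DD_one_right (h : bcG) : DD h 1 = 0 := by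
  simp only [DD, toAdd_one]
  show _ * (0 : ZMod 5) - _ * 0 = 0
  ring

lemma DD_self (g : bcG) : DD g g = 0 := by
  simp only [DD]
  ring

lemma conj_eq' {G : Type*} [Group G] {a b : G} (h : Commute a b) : a⁻¹ * b * a = b := by
  have := conj_eq h.inv_left
  rwa [inv_inv] at this

lemma czp_one' : czp φ ψ (1 : ZMod 5) = cc φ ψ := by
  show cc φ ψ ^ (1 : ZMod 5).val = cc φ ψ
  have : (1 : ZMod 5).val = 1 := rfl
  rw [this, pow_one]

lemma czp_comm (a b : ZMod 5) : czp φ ψ a * czp φ ψ b = czp φ ψ b * czp φ ψ a :=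
  (Commute.pow_pow_self _ _ _).eq

include hφ0 hφ1 hψ0 hψ1 in
lemma comm_m₁ (p p' : P1) :
    ⁅m₁ φ ψ p, m₁ φ ψ p'⁆ = czp φ ψ (DD (φ p) (φ p')) := by
  have hcz : ∀ (x : QQ φ ψ) (z : ZMod 5), Commute x (czp φ ψ z) :=
    fun x z => (cc_central φ ψ hφ0 hφ1 hψ0 hψ1 x).pow_right _
  have hadd := czp_add φ ψ hφ0 hφ1 hψ0 hψ1
  have hneg := czp_neg φ ψ hφ0 hφ1 hψ0 hψ1
  have hD01 : DD (φ (PresentedGroup.of 0)) (φ (PresentedGroup.of 1)) = 1 := by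
    rw [hφ0, hφ1]; decide
  have hD10 : DD (φ (PresentedGroup.of 1)) (φ (PresentedGroup.of 0)) = -1 := by
    rw [hφ0, hφ1]; decide
  -- inner induction
  have row : ∀ q : P1,
      ⁅m₁ φ ψ q, m₁ φ ψ (PresentedGroup.of 0)⁆ = czp φ ψ (DD (φ q) (φ (PresentedGroup.of 0))) →
      ⁅m₁ φ ψ q, m₁ φ ψ (PresentedGroup.of 1)⁆ = czp φ ψ (DD (φ q) (φ (PresentedGroup.of 1))) →
      ∀ q', ⁅m₁ φ ψ q, m₁ φ ψ q'⁆ = czp φ ψ (DD (φ q) (φ q')) := by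
    intro q hq0 hq1 q'
    set S : Subgroup P1 :=
      { carrier := {q' | ⁅m₁ φ ψ q, m₁ φ ψ q'⁆ = czp φ ψ (DD (φ q) (φ q'))}
        one_mem' := by
          show ⁅m₁ φ ψ q, m₁ φ ψ 1⁆ = czp φ ψ (DD (φ q) (φ 1))
          rw [map_one, map_one, commutatorElement_one_right, DD_one_right, czp_zero']
        mul_mem' := by
          intro a b ha hb
          show ⁅m₁ φ ψ q, m₁ φ ψ (a * b)⁆ = czp φ ψ (DD (φ q) (φ (a * b)))
          rw [map_mul, comm_mul_right, ha, hb, conj_eq (hcz _ _), ← hadd, map_mul,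
            DD_mul_right]
        inv_mem' := by
          intro a ha
          show ⁅m₁ φ ψ q, m₁ φ ψ a⁻¹⁆ = czp φ ψ (DD (φ q) (φ a⁻¹))
          rw [map_inv, comm_inv_right, ha, ← hneg, conj_eq' (hcz _ _), map_inv,
            DD_inv_right] } with hS
    have h2 : PresentedGroup.of 2 ∈ S := by
      rw [P1_rel]
      exact S.inv_mem (S.mul_mem hq0 hq1)
    refine PresentedGroup.generated_by _ S (fun i => ?_) q'
    fin_cases i
    · exact hq0
    · exact hq1
    · exact h2
  -- outer induction
  set T : Subgroup P1 :=
    { carrier := {p | ∀ p', ⁅m₁ φ ψ p, m₁ φ ψ p'⁆ = czp φ ψ (DD (φ p) (φ p'))}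
      one_mem' := by
        intro p'
        show ⁅m₁ φ ψ 1, m₁ φ ψ p'⁆ = czp φ ψ (DD (φ 1) (φ p'))
        rw [map_one, map_one, commutatorElement_one_left, DD_one_left, czp_zero']
      mul_mem' := by
        intro a b ha hb
        intro p'
        show ⁅m₁ φ ψ (a * b), m₁ φ ψ p'⁆ = czp φ ψ (DD (φ (a * b)) (φ p'))
        rw [map_mul, comm_mul_left, ha p', hb p', conj_eq (hcz _ _), map_mul,
          DD_mul_left, hadd, czp_comm]
      inv_mem' := by
        intro a ha
        intro p'
        show ⁅m₁ φ ψ a⁻¹, m₁ φ ψ p'⁆ = czp φ ψ (DD (φ a⁻¹) (φ p'))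
        rw [map_inv, comm_inv_left, ha p', ← hneg, conj_eq' (hcz _ _), map_inv,
          DD_inv_left] } with hT
  have hrow0 : PresentedGroup.of 0 ∈ T := by
    refine row (PresentedGroup.of 0) ?_ ?_
    · rw [commutatorElement_self, DD_self, czp_zero']
    · rw [m₁_comm_base, hD01, czp_one']
  have hrow1 : PresentedGroup.of 1 ∈ T := by
    refine row (PresentedGroup.of 1) ?_ ?_
    · rw [← commutatorElement_inv, m₁_comm_base, hD10, hneg, czp_one']
    · rw [commutatorElement_self, DD_self, czp_zero']
  have hrow2 : PresentedGroup.of 2 ∈ T := by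
    rw [P1_rel]
    exact T.inv_mem (T.mul_mem hrow0 hrow1)
  refine PresentedGroup.generated_by _ T (fun i => ?_) p p'
  fin_cases i
  · exact hrow0
  · exact hrow1
  · exact hrow2

include hφ0 hφ1 hψ0 hψ1 in
lemma comm_m₂ (q q' : P2) :
    ⁅m₂ φ ψ q, m₂ φ ψ q'⁆ = czp φ ψ (- DD (ψ q) (ψ q')) := by
  have hneg := czp_neg φ ψ hφ0 hφ1 hψ0 hψ1
  have hu : ((sec₁ (ψ q) : P1), q) ∈ KK φ ψ := (mem_K φ ψ).mpr (hsec₁ φ hφ0 hφ1 _)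
  have hu' : ((sec₁ (ψ q') : P1), q') ∈ KK φ ψ := (mem_K φ ψ).mpr (hsec₁ φ hφ0 hφ1 _)
  have h0 : qmk φ ψ ⁅(sec₁ (ψ q), q), (sec₁ (ψ q'), q')⁆ = 1 := by
    rw [map_commutatorElement]
    exact (KCommute φ ψ hu hu').commutator_eq
  rw [prod_commutator] at h0
  have hsplit : ((⁅sec₁ (ψ q), sec₁ (ψ q')⁆ : P1), (⁅q, q'⁆ : P2)) =
      ((⁅sec₁ (ψ q), sec₁ (ψ q')⁆ : P1), (1 : P2)) * ((1 : P1), (⁅q, q'⁆ : P2)) := by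
    simp [Prod.ext_iff]
  rw [hsplit, map_mul] at h0
  have e1 : qmk φ ψ ((⁅sec₁ (ψ q), sec₁ (ψ q')⁆ : P1), (1 : P2)) =
      m₁ φ ψ ⁅sec₁ (ψ q), sec₁ (ψ q')⁆ := rfl
  have e2 : qmk φ ψ ((1 : P1), (⁅q, q'⁆ : P2)) = m₂ φ ψ ⁅q, q'⁆ := rfl
  rw [e1, e2, map_commutatorElement, map_commutatorElement,
    comm_m₁ φ ψ hφ0 hφ1 hψ0 hψ1, hsec₁ φ hφ0 hφ1, hsec₁ φ hφ0 hφ1] at h0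
  rw [hneg]
  exact eq_inv_of_mul_eq_one_right h0

include hφ0 hφ1 hψ0 hψ1 in
lemma comm_all (x y : FF) : ⁅qmk φ ψ x, qmk φ ψ y⁆ ∈ Subgroup.zpowers (cc φ ψ) := by
  rw [← map_commutatorElement]
  have hx : ⁅x, y⁆ = (⁅x.1, y.1⁆, ⁅x.2, y.2⁆) := rfl
  rw [hx, show ((⁅x.1, y.1⁆ : P1), (⁅x.2, y.2⁆ : P2)) =
      ((⁅x.1, y.1⁆ : P1), (1 : P2)) * ((1 : P1), (⁅x.2, y.2⁆ : P2)) by simp [Prod.ext_iff],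
    map_mul]
  have e1 : qmk φ ψ ((⁅x.1, y.1⁆ : P1), (1 : P2)) = m₁ φ ψ ⁅x.1, y.1⁆ := rfl
  have e2 : qmk φ ψ ((1 : P1), (⁅x.2, y.2⁆ : P2)) = m₂ φ ψ ⁅x.2, y.2⁆ := rfl
  rw [e1, e2, map_commutatorElement, map_commutatorElement,
    comm_m₁ φ ψ hφ0 hφ1 hψ0 hψ1, comm_m₂ φ ψ hφ0 hφ1 hψ0 hψ1]
  exact Subgroup.mul_mem _ (Subgroup.pow_mem _ (Subgroup.mem_zpowers _) _)
    (Subgroup.pow_mem _ (Subgroup.mem_zpowers _) _)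

/-! ### lower bound via `BH` -/

def bhπ₁ : BH →* bcG where
  toFun h := Multiplicative.ofAdd (h.x1, h.y1)
  map_one' := rfl
  map_mul' _ _ := rfl

def bhπ₂ : BH →* bcG where
  toFun h := Multiplicative.ofAdd (h.x2, h.y2)
  map_one' := rfl
  map_mul' _ _ := rfl

include hφ0 hφ1 hφ2 in
lemma bhE1 : ∀ p : P1, bhπ₁ (bhF₁ p) = φ p := by
  intro p
  refine PresentedGroup.generated_by _
    { carrier := {p | bhπ₁ (bhF₁ p) = φ p}
      one_mem' := by show bhπ₁ (bhF₁ 1) = φ 1; rw [map_one, map_one, map_one]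
      mul_mem' := by
        intro a b ha hb
        show bhπ₁ (bhF₁ (a * b)) = φ (a * b)
        rw [map_mul, map_mul, map_mul, ha, hb]
      inv_mem' := by
        intro a ha
        show bhπ₁ (bhF₁ a⁻¹) = φ a⁻¹
        rw [map_inv, map_inv, map_inv, ha] } (fun i => ?_) p
  have c0 : bhπ₁ (bhF₁ (PresentedGroup.of (0 : Fin 3))) = φ (PresentedGroup.of 0) := by
    rw [bhF₁, PresentedGroup.toGroup.of, hφ0]; decide
  have c1 : bhπ₁ (bhF₁ (PresentedGroup.of (1 : Fin 3))) = φ (PresentedGroup.of 1) := by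
    rw [bhF₁, PresentedGroup.toGroup.of, hφ1]; decide
  have c2 : bhπ₁ (bhF₁ (PresentedGroup.of (2 : Fin 3))) = φ (PresentedGroup.of 2) := by
    rw [bhF₁, PresentedGroup.toGroup.of, hφ2]; decide
  show bhπ₁ (bhF₁ (PresentedGroup.of i)) = φ (PresentedGroup.of i)
  fin_cases i
  · exact c0
  · exact c1
  · exact c2

include hψ0 hψ1 hψ2 in
lemma bhE4 : ∀ q : P2, bhπ₂ (bhF₂ q) = ψ q := by
  intro q
  refine PresentedGroup.generated_by _
    { carrier := {q | bhπ₂ (bhF₂ q) = ψ q}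
      one_mem' := by show bhπ₂ (bhF₂ 1) = ψ 1; rw [map_one, map_one, map_one]
      mul_mem' := by
        intro a b ha hb
        show bhπ₂ (bhF₂ (a * b)) = ψ (a * b)
        rw [map_mul, map_mul, map_mul, ha, hb]
      inv_mem' := by
        intro a ha
        show bhπ₂ (bhF₂ a⁻¹) = ψ a⁻¹
        rw [map_inv, map_inv, map_inv, ha] } (fun i => ?_) q
  have c0 : bhπ₂ (bhF₂ (PresentedGroup.of (0 : Fin 3))) = ψ (PresentedGroup.of 0) := by
    rw [bhF₂, PresentedGroup.toGroup.of, hψ0]; decide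
  have c1 : bhπ₂ (bhF₂ (PresentedGroup.of (1 : Fin 3))) = ψ (PresentedGroup.of 1) := by
    rw [bhF₂, PresentedGroup.toGroup.of, hψ1]; decide
  have c2 : bhπ₂ (bhF₂ (PresentedGroup.of (2 : Fin 3))) = ψ (PresentedGroup.of 2) := by
    rw [bhF₂, PresentedGroup.toGroup.of, hψ2]; decide
  show bhπ₂ (bhF₂ (PresentedGroup.of i)) = ψ (PresentedGroup.of i)
  fin_cases i
  · exact c0
  · exact c1
  · exact c2

lemma bhE2 (q : P2) : bhπ₁ (bhF₂ q) = 1 := by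
  obtain ⟨h1, h2⟩ := bhF₂_mem q
  have : bhπ₁ (bhF₂ q) = Multiplicative.ofAdd ((bhF₂ q).x1, (bhF₂ q).y1) := rfl
  rw [this, h1, h2]
  rfl

lemma bhE3 (p : P1) : bhπ₂ (bhF₁ p) = 1 := by
  obtain ⟨h1, h2⟩ := bhF₁_mem p
  have : bhπ₂ (bhF₁ p) = Multiplicative.ofAdd ((bhF₁ p).x2, (bhF₁ p).y2) := rfl
  rw [this, h1, h2]
  rfl

lemma bh_sa_commute {a b : BH} (ha1 : a.x1 = a.x2) (ha2 : a.y1 = a.y2)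
    (hb1 : b.x1 = b.x2) (hb2 : b.y1 = b.y2) : Commute a b := by
  show a * b = b * a
  ext
  · show a.x1 + b.x1 = b.x1 + a.x1; ring
  · show a.y1 + b.y1 = b.y1 + a.y1; ring
  · show a.x2 + b.x2 = b.x2 + a.x2; ring
  · show a.y2 + b.y2 = b.y2 + a.y2; ring
  · show a.t + b.t + a.x1 * b.y1 - a.x2 * b.y2 = b.t + a.t + b.x1 * a.y1 - b.x2 * a.y2
    rw [ha1, ha2, hb1, hb2]
    ring

include hφ0 hφ1 hφ2 hψ0 hψ1 hψ2 in
lemma bh_coord {x : FF} (hx : x ∈ KK φ ψ) :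
    ((bhρ x).x1 = (bhρ x).x2 ∧ (bhρ x).y1 = (bhρ x).y2) := by
  have hx' := (mem_K φ ψ).mp hx
  have h1 : bhπ₁ (bhρ x) = φ x.1 := by
    rw [bhρ, MonoidHom.noncommCoprod_apply, map_mul, bhE1 φ hφ0 hφ1 hφ2, bhE2, mul_one]
  have h2 : bhπ₂ (bhρ x) = ψ x.2 := by
    rw [bhρ, MonoidHom.noncommCoprod_apply, map_mul, bhE4 ψ hψ0 hψ1 hψ2, bhE3, one_mul]
  have h3 : bhπ₁ (bhρ x) = bhπ₂ (bhρ x) := by rw [h1, h2, hx']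
  have h4 := congrArg Multiplicative.toAdd h3
  exact ⟨congrArg Prod.fst h4, congrArg Prod.snd h4⟩

include hφ0 hφ1 hφ2 hψ0 hψ1 hψ2 in
lemma bhN_le_ker : NN φ ψ ≤ bhρ.ker := by
  rw [Subgroup.commutator_le]
  intro k hk k' hk'
  rw [MonoidHom.mem_ker, map_commutatorElement]
  obtain ⟨a1, a2⟩ := bh_coord φ ψ hφ0 hφ1 hφ2 hψ0 hψ1 hψ2 hk
  obtain ⟨b1, b2⟩ := bh_coord φ ψ hφ0 hφ1 hφ2 hψ0 hψ1 hψ2 hk'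
  exact (bh_sa_commute a1 a2 b1 b2).commutator_eq

include hφ0 hφ1 hφ2 hψ0 hψ1 hψ2 in
lemma cc_ne_one : cc φ ψ ≠ 1 := by
  intro h
  have hlift := QuotientGroup.lift_mk' (N := NN φ ψ) (φ := bhρ)
    (bhN_le_ker φ ψ hφ0 hφ1 hφ2 hψ0 hψ1 hψ2)
    ((⁅(PresentedGroup.of 0 : P1), PresentedGroup.of 1⁆ : P1), (1 : P2))
  have hcc : QuotientGroup.lift (NN φ ψ) bhρ (bhN_le_ker φ ψ hφ0 hφ1 hφ2 hψ0 hψ1 hψ2)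
      (cc φ ψ) = bhρ ((⁅(PresentedGroup.of 0 : P1), PresentedGroup.of 1⁆ : P1), (1 : P2)) :=
    hlift
  rw [h, map_one] at hcc
  have hval : bhρ ((⁅(PresentedGroup.of 0 : P1), PresentedGroup.of 1⁆ : P1), (1 : P2)) =
      ⁅bhGen₁ 0, bhGen₁ 1⁆ := by
    rw [bhρ, MonoidHom.noncommCoprod_apply, map_one, mul_one, map_commutatorElement,
      bhF₁, PresentedGroup.toGroup.of, PresentedGroup.toGroup.of]
  rw [hval] at hcc
  have : (⁅bhGen₁ 0, bhGen₁ 1⁆ : BH) ≠ 1 := by decide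
  exact this hcc.symm

include hφ0 hφ1 hφ2 hψ0 hψ1 hψ2 in
theorem main_iso :
    Nonempty ((Subgroup.map (QuotientGroup.mk' (NN φ ψ))
        ⁅(⊤ : Subgroup FF), (⊤ : Subgroup FF)⁆) ≃* Multiplicative (ZMod 5)) := by
  haveI : Fact (Nat.Prime 5) := ⟨by norm_num⟩
  have hc5 := cc_five φ ψ hφ0 hφ1 hψ0 hψ1
  have hcne := cc_ne_one φ ψ hφ0 hφ1 hφ2 hψ0 hψ1 hψ2
  have horder : orderOf (cc φ ψ) = 5 := orderOf_eq_prime hc5 hcne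
  set T := Subgroup.map (QuotientGroup.mk' (NN φ ψ))
    ⁅(⊤ : Subgroup FF), (⊤ : Subgroup FF)⁆ with hTdef
  have hTle : T ≤ Subgroup.zpowers (cc φ ψ) := by
    rw [hTdef, Subgroup.map_commutator, Subgroup.commutator_le]
    intro g hg h hh
    obtain ⟨x, -, rfl⟩ := hg
    obtain ⟨y, -, rfl⟩ := hh
    exact comm_all φ ψ hφ0 hφ1 hψ0 hψ1 x y
  have hpair : ((⁅(PresentedGroup.of 0 : P1), PresentedGroup.of 1⁆ : P1), (1 : P2)) =
      ⁅((PresentedGroup.of 0 : P1), (1 : P2)), ((PresentedGroup.of 1 : P1), (1 : P2))⁆ := by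
    rw [prod_commutator, commutatorElement_self]
  have hccT : cc φ ψ ∈ T := by
    rw [hTdef]
    refine Subgroup.mem_map.mpr
      ⟨⁅((PresentedGroup.of 0 : P1), (1 : P2)), ((PresentedGroup.of 1 : P1), (1 : P2))⁆,
        Subgroup.commutator_mem_commutator (Subgroup.mem_top _) (Subgroup.mem_top _), ?_⟩
    rw [← hpair]
    rfl
  -- the homomorphism from ZMod 5
  have hmemT : ∀ x : Multiplicative (ZMod 5), czp φ ψ x.toAdd ∈ T :=
    fun x => Subgroup.pow_mem T hccT _
  let θ : Multiplicative (ZMod 5) →* QQ φ ψ :=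
    { toFun := fun x => czp φ ψ x.toAdd
      map_one' := czp_zero' φ ψ
      map_mul' := fun a b => czp_add φ ψ hφ0 hφ1 hψ0 hψ1 _ _ }
  let θ' : Multiplicative (ZMod 5) →* T := θ.codRestrict T hmemT
  have hzero : ∀ z : ZMod 5, czp φ ψ z = 1 → z = 0 := by
    intro z hz
    have h5 : orderOf (cc φ ψ) ∣ z.val := orderOf_dvd_of_pow_eq_one hz
    rw [horder] at h5
    exact (ZMod.val_eq_zero z).mp (Nat.eq_zero_of_dvd_of_lt h5 (ZMod.val_lt z))
  have hinj : Function.Injective θ' := by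
    intro a b hab
    have h1 : czp φ ψ a.toAdd = czp φ ψ b.toAdd := congrArg Subtype.val hab
    have h2 : czp φ ψ (a.toAdd - b.toAdd) = 1 := by
      rw [sub_eq_add_neg, czp_add φ ψ hφ0 hφ1 hψ0 hψ1, czp_neg φ ψ hφ0 hφ1 hψ0 hψ1, h1,
        mul_inv_cancel]
    have h3 := hzero _ h2
    have h4 : a.toAdd = b.toAdd := by
      have := sub_eq_zero.mp h3
      exact this
    exact Multiplicative.toAdd.injective h4
  have hintpow : ∀ m : ℤ, czp φ ψ ((m : ZMod 5)) = cc φ ψ ^ m := by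
    intro m
    have hz5 : cc φ ψ ^ (5 : ℤ) = 1 := by
      rw [show (5 : ℤ) = ((5 : ℕ) : ℤ) from rfl, zpow_natCast, hc5]
    have h2 : cc φ ψ ^ m = cc φ ψ ^ (m % 5) := by
      conv_lhs => rw [← Int.mul_ediv_add_emod m 5]
      rw [zpow_add, zpow_mul, hz5, one_zpow, one_mul]
    have h3 : (((m : ZMod 5).val : ℤ)) = m % 5 := ZMod.val_intCast m
    rw [czp, h2, ← h3, zpow_natCast]
  have hsurj : Function.Surjective θ' := by
    intro t
    obtain ⟨m, hm⟩ := Subgroup.mem_zpowers_iff.mp (hTle t.2)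
    refine ⟨Multiplicative.ofAdd ((m : ZMod 5)), ?_⟩
    apply Subtype.ext
    show czp φ ψ ((Multiplicative.ofAdd ((m : ZMod 5))).toAdd) = (t : QQ φ ψ)
    rw [toAdd_ofAdd, hintpow m, hm]
  exact ⟨(MulEquiv.ofBijective θ' ⟨hinj, hsurj⟩).symm⟩

end Main

end BC

/-- Bauer–Catanese case `G = (ℤ/5ℤ)²`. With `F = Π₁ × Π₂` and `K` the
kernel of `(p,q) ↦ φ(p) - ψ(q)`, the quotient `⁅F,F⁆/⁅K,K⁆` (realized as the image
of `⁅F,F⁆` in `F/⁅K,K⁆`) is isomorphic to `ℤ/5ℤ`. -/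
theorem bauer_catanese_Z5_commutator_quotient
    (φ : PresentedGroup bcRels₁ →* bcG) (ψ : PresentedGroup bcRels₂ →* bcG)
    (hφ0 : φ (PresentedGroup.of 0) = Multiplicative.ofAdd (1, 0))
    (hφ1 : φ (PresentedGroup.of 1) = Multiplicative.ofAdd (0, 1))
    (hφ2 : φ (PresentedGroup.of 2) = Multiplicative.ofAdd (-1, -1))
    (hψ0 : ψ (PresentedGroup.of 0) = Multiplicative.ofAdd (1, 2))
    (hψ1 : ψ (PresentedGroup.of 1) = Multiplicative.ofAdd (3, 4))
    (hψ2 : ψ (PresentedGroup.of 2) = Multiplicative.ofAdd (1, 4)) :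
    Nonempty
      ((Subgroup.map
          (QuotientGroup.mk'
            ⁅MonoidHom.ker
                (φ.comp (MonoidHom.fst (PresentedGroup bcRels₁) (PresentedGroup bcRels₂)) /
                  ψ.comp (MonoidHom.snd (PresentedGroup bcRels₁) (PresentedGroup bcRels₂))),
              MonoidHom.ker
                (φ.comp (MonoidHom.fst (PresentedGroup bcRels₁) (PresentedGroup bcRels₂)) /
                  ψ.comp (MonoidHom.snd (PresentedGroup bcRels₁) (PresentedGroup bcRels₂)))⁆)
          ⁅(⊤ : Subgroup (PresentedGroup bcRels₁ × PresentedGroup bcRels₂)),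
            (⊤ : Subgroup (PresentedGroup bcRels₁ × PresentedGroup bcRels₂))⁆) ≃*
        Multiplicative (ZMod 5)) := by
  exact BC.main_iso φ ψ hφ0 hφ1 hφ2 hψ0 hψ1 hψ2
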